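/- Let (Y_i)_{1≤i≤N} be centered, integrable real random variables such that for some constant C_0 > 0 and rate C > 0, the bound |E[Y_i Y_j Y_k Y_l]| ≤ C_0 exp(−C · max(|i−j|, |k−l|)) holds for all indices i ≤ j ≤ k ≤ l in {1,…,N}. Then there exists a constant C' depending only on C_0 and C (not on N) such that E[(∑_{i=1}^N Y_i)^4] ≤ C' N². -/

import Mathlib

open MeasureTheory Finset

private theorem perm4_cases : ∀ σ : Equiv.Perm (Fin 4),
    (((σ 0 = 0 ∧ σ 1 = 1) ∨ (σ 0 = 1 ∧ σ 1 = 0)) ∧ ((σ 2 = 2 ∧ σ 3 = 3) ∨ (σ 2 = 3 ∧ σ 3 = 2))) ∨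
    (((σ 0 = 2 ∧ σ 1 = 3) ∨ (σ 0 = 3 ∧ σ 1 = 2)) ∧ ((σ 2 = 0 ∧ σ 3 = 1) ∨ (σ 2 = 1 ∧ σ 3 = 0))) ∨
    (((σ 0 = 0 ∧ σ 1 = 2) ∨ (σ 0 = 2 ∧ σ 1 = 0)) ∧ ((σ 2 = 1 ∧ σ 3 = 3) ∨ (σ 2 = 3 ∧ σ 3 = 1))) ∨
    (((σ 0 = 1 ∧ σ 1 = 3) ∨ (σ 0 = 3 ∧ σ 1 = 1)) ∧ ((σ 2 = 0 ∧ σ 3 = 2) ∨ (σ 2 = 2 ∧ σ 3 = 0))) ∨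
    (((σ 0 = 0 ∧ σ 1 = 3) ∨ (σ 0 = 3 ∧ σ 1 = 0)) ∧ ((σ 2 = 1 ∧ σ 3 = 2) ∨ (σ 2 = 2 ∧ σ 3 = 1))) ∨
    (((σ 0 = 1 ∧ σ 1 = 2) ∨ (σ 0 = 2 ∧ σ 1 = 1)) ∧ ((σ 2 = 0 ∧ σ 3 = 3) ∨ (σ 2 = 3 ∧ σ 3 = 0))) := by
  decide

private theorem pairing_bound {α : Type*} (d : α → α → ℝ) (hd0 : ∀ x y, 0 ≤ d x y)
    (hds : ∀ x y, d x y = d y x) (i j k l : α) (σ : Equiv.Perm (Fin 4)) :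
    d (![i,j,k,l] (σ 0)) (![i,j,k,l] (σ 1)) * d (![i,j,k,l] (σ 2)) (![i,j,k,l] (σ 3)) ≤
      d i j * d k l + d i k * d j l + d i l * d j k := by
  have h := perm4_cases σ
  rcases h with ⟨h01 | h01, h23 | h23⟩ | ⟨h01 | h01, h23 | h23⟩ | ⟨h01 | h01, h23 | h23⟩ |
    ⟨h01 | h01, h23 | h23⟩ | ⟨h01 | h01, h23 | h23⟩ | ⟨h01 | h01, h23 | h23⟩ <;>
    obtain ⟨e0, e1⟩ := h01 <;> obtain ⟨e2, e3⟩ := h23 <;>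
    simp only [e0, e1, e2, e3,
      show (![i,j,k,l] : Fin 4 → α) 0 = i from rfl,
      show (![i,j,k,l] : Fin 4 → α) 1 = j from rfl,
      show (![i,j,k,l] : Fin 4 → α) 2 = k from rfl,
      show (![i,j,k,l] : Fin 4 → α) 3 = l from rfl, hds j i, hds k i, hds l i, hds k j,
      hds l j, hds l k] <;>
    linarith [mul_nonneg (hd0 i j) (hd0 k l), mul_nonneg (hd0 i k) (hd0 j l),
      mul_nonneg (hd0 i l) (hd0 j k)]

private theorem abs_cast_sub (m n : ℕ) : |(m : ℝ) - n| = (Nat.dist m n : ℝ) := by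
  rcases le_total m n with h | h
  · rw [Nat.dist_eq_sub_of_le h, Nat.cast_sub h, abs_sub_comm,
      abs_of_nonneg (sub_nonneg.mpr (Nat.cast_le.mpr h))]
  · rw [Nat.dist_eq_sub_of_le_right h, Nat.cast_sub h,
      abs_of_nonneg (sub_nonneg.mpr (Nat.cast_le.mpr h))]

private theorem row_bound (r : ℝ) (hr0 : 0 < r) (hr1 : r < 1) (N m : ℕ) (hm : m < N) :
    ∑ n ∈ Finset.range N, r ^ (Nat.dist m n) ≤ 2 / (1 - r) := by
  classical
  have h1r : 0 < 1 - r := by linarith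
  have hinj : ∀ x ∈ Finset.range N, ∀ y ∈ Finset.range N,
      (fun n => (Nat.dist m n, decide (n ≤ m))) x = (fun n => (Nat.dist m n, decide (n ≤ m))) y →
      x = y := by
    intro x _ y _ hxy
    simp only [Prod.mk.injEq, decide_eq_decide, Nat.dist] at hxy
    omega
  have him : (Finset.range N).image (fun n => (Nat.dist m n, decide (n ≤ m)))
      ⊆ Finset.range N ×ˢ (Finset.univ : Finset Bool) := by
    intro p hp
    simp only [Finset.mem_image, Finset.mem_range] at hp
    obtain ⟨n, hn, rfl⟩ := hp
    simp only [Finset.mem_product, Finset.mem_range, Finset.mem_univ, and_true, Nat.dist]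
    omega
  have hgeom : ∑ t ∈ Finset.range N, r ^ t ≤ 1 / (1 - r) := by
    rw [geom_sum_eq (ne_of_lt hr1), show (r ^ N - 1) / (r - 1) = (1 - r ^ N) / (1 - r) by
      rw [← neg_div_neg_eq]; congr 1 <;> ring]
    rw [div_le_div_iff₀ h1r h1r]
    nlinarith [pow_nonneg hr0.le N]
  calc ∑ n ∈ Finset.range N, r ^ (Nat.dist m n)
      = ∑ p ∈ (Finset.range N).image (fun n => (Nat.dist m n, decide (n ≤ m))), r ^ p.1 := by
        rw [Finset.sum_image hinj]
    _ ≤ ∑ p ∈ Finset.range N ×ˢ (Finset.univ : Finset Bool), r ^ p.1 :=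
        Finset.sum_le_sum_of_subset_of_nonneg him (fun p _ _ => by positivity)
    _ = ∑ x ∈ Finset.range N, ∑ _y ∈ (Finset.univ : Finset Bool), r ^ x := by
        rw [Finset.sum_product]
    _ = 2 * ∑ x ∈ Finset.range N, r ^ x := by
        simp [Finset.sum_const, Finset.card_univ, Finset.mul_sum]
    _ ≤ 2 * (1 / (1 - r)) := by linarith
    _ = 2 / (1 - r) := by ring

/-- Fourth moment bound: centered variables with exponentially decaying fourth-order
correlations satisfy `E[(∑ Y_i)^4] ≤ C' N²` with `C'` independent of `N`. -/
theorem stmt4 (C₀ C : ℝ) (hC₀ : 0 < C₀) (hC : 0 < C) :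
    ∃ C' : ℝ, 0 < C' ∧
      ∀ (N : ℕ) (Ω : Type) (mΩ : MeasurableSpace Ω) (μ : Measure Ω),
        IsProbabilityMeasure μ →
        ∀ Y : Fin N → Ω → ℝ,
        (∀ i, Integrable (Y i) μ) →
        (∀ i, ∫ ω, Y i ω ∂μ = 0) →
        (∀ i j k l : Fin N, (i : ℕ) ≤ j → (j : ℕ) ≤ k → (k : ℕ) ≤ l →
          Integrable (fun ω => Y i ω * Y j ω * Y k ω * Y l ω) μ ∧
          |∫ ω, Y i ω * Y j ω * Y k ω * Y l ω ∂μ| ≤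
            C₀ * Real.exp (-C * max |((i : ℕ) : ℝ) - ((j : ℕ) : ℝ)|
                                    |((k : ℕ) : ℝ) - ((l : ℕ) : ℝ)|)) →
        ∫ ω, (∑ i, Y i ω) ^ 4 ∂μ ≤ C' * (N : ℝ) ^ 2 := by
  classical
  set r : ℝ := Real.exp (-(C/2)) with hrdef
  have hrpos : 0 < r := Real.exp_pos _
  have hrlt : r < 1 := by
    rw [hrdef, show (1:ℝ) = Real.exp 0 from (Real.exp_zero).symm]
    exact Real.exp_lt_exp.mpr (by linarith)
  have h1r : 0 < 1 - r := by linarith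
  refine ⟨12 * C₀ / (1 - r) ^ 2, by positivity, ?_⟩
  intro N Ω mΩ μ hμ Y hint hcent hcorr
  set d : Fin N → Fin N → ℝ := fun x y => r ^ Nat.dist (x : ℕ) (y : ℕ) with hd
  have hd0 : ∀ x y, 0 ≤ d x y := fun x y => pow_nonneg hrpos.le _
  have hds : ∀ x y, d x y = d y x := fun x y => by simp [hd, Nat.dist_comm]
  -- key bound for sorted indices
  have key : ∀ p q u v : Fin N, (p : ℕ) ≤ q → (q : ℕ) ≤ u → (u : ℕ) ≤ v →
      |∫ ω, Y p ω * Y q ω * Y u ω * Y v ω ∂μ| ≤ C₀ * (d p q * d u v) := by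
    intro p q u v h1 h2 h3
    refine (hcorr p q u v h1 h2 h3).2.trans ?_
    rw [abs_cast_sub, abs_cast_sub]
    have hmax : -C * max ((Nat.dist p q : ℕ) : ℝ) ((Nat.dist u v : ℕ) : ℝ) ≤
        -(C/2) * ((Nat.dist p q : ℕ) : ℝ) + -(C/2) * ((Nat.dist u v : ℕ) : ℝ) := by
      rcases max_cases ((Nat.dist p q : ℕ) : ℝ) ((Nat.dist u v : ℕ) : ℝ) with ⟨he, hle⟩ | ⟨he, hle⟩ <;>
        rw [he] <;> nlinarith
    have hstep := mul_le_mul_of_nonneg_left (Real.exp_le_exp.mpr hmax) hC₀.le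
    refine hstep.trans (le_of_eq ?_)
    have e3 : Real.exp (-(C/2) * ((Nat.dist (p : ℕ) (q : ℕ) : ℕ) : ℝ)) = d p q := by
      rw [mul_comm, Real.exp_nat_mul, ← hrdef]
    have e4 : Real.exp (-(C/2) * ((Nat.dist (u : ℕ) (v : ℕ) : ℕ) : ℝ)) = d u v := by
      rw [mul_comm, Real.exp_nat_mul, ← hrdef]
    rw [Real.exp_add, e3, e4]
  -- main bound for arbitrary indices, via sorting
  have main : ∀ i j k l : Fin N,
      Integrable (fun ω => Y i ω * Y j ω * Y k ω * Y l ω) μ ∧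
      |∫ ω, Y i ω * Y j ω * Y k ω * Y l ω ∂μ| ≤
        C₀ * (d i j * d k l + d i k * d j l + d i l * d j k) := by
    intro i j k l
    set t : Fin 4 → Fin N := ![i, j, k, l] with ht
    set σ := Tuple.sort t with hσt
    have hmono := Tuple.monotone_sort t
    have h01 : ((t (σ 0) : Fin N) : ℕ) ≤ t (σ 1) := hmono (by decide)
    have h12 : ((t (σ 1) : Fin N) : ℕ) ≤ t (σ 2) := hmono (by decide)
    have h23 : ((t (σ 2) : Fin N) : ℕ) ≤ t (σ 3) := hmono (by decide)
    have heq : (fun ω => Y i ω * Y j ω * Y k ω * Y l ω)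
        = fun ω => Y (t (σ 0)) ω * Y (t (σ 1)) ω * Y (t (σ 2)) ω * Y (t (σ 3)) ω := by
      funext ω
      have h1 : Y i ω * Y j ω * Y k ω * Y l ω = ∏ m : Fin 4, Y (t m) ω := by
        simp [Fin.prod_univ_four, ht]
      have h2 : ∏ m : Fin 4, Y (t m) ω = ∏ m : Fin 4, Y (t (σ m)) ω :=
        (Equiv.prod_comp σ fun m => Y (t m) ω).symm
      rw [h1, h2, Fin.prod_univ_four]
    constructor
    · rw [heq]; exact (hcorr _ _ _ _ h01 h12 h23).1
    · rw [heq]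
      refine (key _ _ _ _ h01 h12 h23).trans ?_
      have hp := pairing_bound d hd0 hds i j k l σ
      rw [← ht] at hp
      exact mul_le_mul_of_nonneg_left hp hC₀.le
  have hint4 : ∀ i j k l : Fin N,
      Integrable (fun ω => Y i ω * Y j ω * Y k ω * Y l ω) μ := fun i j k l => (main i j k l).1
  -- expand the fourth power
  have I3 : ∀ i j k : Fin N,
      Integrable (fun ω => ∑ l, Y i ω * Y j ω * Y k ω * Y l ω) μ :=
    fun i j k => integrable_finset_sum _ (fun l _ => hint4 i j k l)
  have I2 : ∀ i j : Fin N,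
      Integrable (fun ω => ∑ k, ∑ l, Y i ω * Y j ω * Y k ω * Y l ω) μ :=
    fun i j => integrable_finset_sum _ (fun k _ => I3 i j k)
  have I1 : ∀ i : Fin N,
      Integrable (fun ω => ∑ j, ∑ k, ∑ l, Y i ω * Y j ω * Y k ω * Y l ω) μ :=
    fun i => integrable_finset_sum _ (fun j _ => I2 i j)
  have hexp : ∫ ω, (∑ i, Y i ω) ^ 4 ∂μ
      = ∑ i, ∑ j, ∑ k, ∑ l, ∫ ω, Y i ω * Y j ω * Y k ω * Y l ω ∂μ := by
    have hfun : (fun ω => (∑ i, Y i ω) ^ 4)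
        = fun ω => ∑ i, ∑ j, ∑ k, ∑ l, Y i ω * Y j ω * Y k ω * Y l ω := by
      funext ω
      rw [show ((∑ i, Y i ω) ^ 4)
        = (∑ i, Y i ω) * ((∑ i, Y i ω) * ((∑ i, Y i ω) * (∑ i, Y i ω))) by ring]
      simp only [Finset.sum_mul, Finset.mul_sum]
      refine Finset.sum_congr rfl fun i _ => Finset.sum_congr rfl fun j _ =>
        Finset.sum_congr rfl fun k _ => Finset.sum_congr rfl fun l _ => by ring
    rw [hfun, integral_finset_sum _ (fun i _ => I1 i)]
    refine Finset.sum_congr rfl fun i _ => ?_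
    rw [integral_finset_sum _ (fun j _ => I2 i j)]
    refine Finset.sum_congr rfl fun j _ => ?_
    rw [integral_finset_sum _ (fun k _ => I3 i j k)]
    refine Finset.sum_congr rfl fun k _ => ?_
    rw [integral_finset_sum _ (fun l _ => hint4 i j k l)]
  -- row sums of d
  have hrow : ∀ x : Fin N, ∑ y : Fin N, d x y ≤ 2 / (1 - r) := by
    intro x
    have h := row_bound r hrpos hrlt N x x.isLt
    calc ∑ y : Fin N, d x y
        = ∑ n ∈ Finset.range N, r ^ Nat.dist (x : ℕ) n :=
          Fin.sum_univ_eq_sum_range (fun n => r ^ Nat.dist (x : ℕ) n) N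
      _ ≤ 2 / (1 - r) := h
  set S := ∑ x : Fin N, ∑ y : Fin N, d x y with hS
  have hS0 : 0 ≤ S := Finset.sum_nonneg fun _ _ => Finset.sum_nonneg fun _ _ => hd0 _ _
  have hSle : S ≤ (N : ℝ) * (2 / (1 - r)) := by
    calc S ≤ ∑ _x : Fin N, (2 / (1 - r)) := Finset.sum_le_sum fun x _ => hrow x
      _ = (N : ℝ) * (2 / (1 - r)) := by
          simp [Finset.sum_const, Finset.card_univ, nsmul_eq_mul]
  -- factorizations
  have hfac1 : (∑ i : Fin N, ∑ j : Fin N, ∑ k : Fin N, ∑ l : Fin N, d i j * d k l) = S * S := by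
    simp_rw [← Finset.mul_sum, ← Finset.sum_mul]
    rfl
  have hfac2 : (∑ i : Fin N, ∑ j : Fin N, ∑ k : Fin N, ∑ l : Fin N, d i k * d j l) = S * S := by
    have hc : ∀ i : Fin N, (∑ j : Fin N, ∑ k : Fin N, ∑ l : Fin N, d i k * d j l)
        = ∑ k : Fin N, ∑ j : Fin N, ∑ l : Fin N, d i k * d j l := fun i => Finset.sum_comm
    simp_rw [hc, ← Finset.mul_sum, ← Finset.sum_mul]
    rfl
  have hfac3 : (∑ i : Fin N, ∑ j : Fin N, ∑ k : Fin N, ∑ l : Fin N, d i l * d j k) = S * S := by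
    have hc1 : ∀ i j : Fin N, (∑ k : Fin N, ∑ l : Fin N, d i l * d j k)
        = ∑ l : Fin N, ∑ k : Fin N, d i l * d j k := fun i j => Finset.sum_comm
    simp_rw [hc1]
    have hc2 : ∀ i : Fin N, (∑ j : Fin N, ∑ l : Fin N, ∑ k : Fin N, d i l * d j k)
        = ∑ l : Fin N, ∑ j : Fin N, ∑ k : Fin N, d i l * d j k := fun i => Finset.sum_comm
    simp_rw [hc2, ← Finset.mul_sum, ← Finset.sum_mul]
    rfl
  -- finish
  calc ∫ ω, (∑ i, Y i ω) ^ 4 ∂μ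
      = ∑ i, ∑ j, ∑ k, ∑ l, ∫ ω, Y i ω * Y j ω * Y k ω * Y l ω ∂μ := hexp
    _ ≤ ∑ i : Fin N, ∑ j : Fin N, ∑ k : Fin N, ∑ l : Fin N,
          C₀ * (d i j * d k l + d i k * d j l + d i l * d j k) := by
        refine Finset.sum_le_sum fun i _ => Finset.sum_le_sum fun j _ =>
          Finset.sum_le_sum fun k _ => Finset.sum_le_sum fun l _ => ?_
        exact (le_abs_self _).trans (main i j k l).2
    _ = C₀ * (S * S + S * S + S * S) := by
        simp_rw [← Finset.mul_sum, Finset.sum_add_distrib]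
        rw [hfac1, hfac2, hfac3]
    _ ≤ 12 * C₀ / (1 - r) ^ 2 * (N : ℝ) ^ 2 := by
        have hNK0 : 0 ≤ (N : ℝ) * (2 / (1 - r)) := by positivity
        have hSS : S * S ≤ ((N : ℝ) * (2 / (1 - r))) * ((N : ℝ) * (2 / (1 - r))) :=
          mul_le_mul hSle hSle hS0 hNK0
        have heq2 : 12 * C₀ / (1 - r) ^ 2 * (N : ℝ) ^ 2
            = C₀ * (((N : ℝ) * (2 / (1 - r))) * ((N : ℝ) * (2 / (1 - r))) * 3) := by
          field_simp
          ring
        rw [heq2]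
        nlinarith [mul_le_mul_of_nonneg_left hSS hC₀.le]
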